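/- Let p : ℝᵐ → ℝ ∪ {+∞} be a proper convex function that admits an affine minorant (i.e. there exist μ ∈ ℝᵐ and β ∈ ℝ with p(u) ≥ ⟨μ, u⟩ + β for all u). Then sup_{ε > 0} inf{p(u) : ‖u‖ ≤ ε} = p**(0), where p*(μ) := sup_u (⟨μ, u⟩ − p(u)) and p**(0) := sup_μ (−p*(μ)); equivalently, lim_{ε ↓ 0} inf{p(u) : ‖u‖ ≤ ε} equals the biconjugate of p evaluated at the origin. -/

import Mathlib

open scoped RealInnerProductSpace

lemma aux_minorant_le_biconj {m : ℕ} (p : EuclideanSpace ℝ (Fin m) → EReal)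
    (μ : EuclideanSpace ℝ (Fin m)) (t : ℝ)
    (h : ∀ w, ((⟪μ, w⟫ + t : ℝ) : EReal) ≤ p w) :
    (t : EReal) ≤ ⨆ ν : EuclideanSpace ℝ (Fin m),
      -(⨆ u : EuclideanSpace ℝ (Fin m), (((⟪ν, u⟫ : ℝ) : EReal) - p u)) := by
  refine le_trans ?_ (le_iSup _ μ)
  refine EReal.le_neg_of_le_neg ?_
  refine iSup_le fun u => ?_
  have hu := h u
  rcases eq_or_ne (p u) ⊤ with htop | hne
  · simp [htop]
  · have hnb : p u ≠ ⊥ := ((EReal.bot_lt_coe _).trans_le hu).ne'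
    lift p u to ℝ using ⟨hne, hnb⟩ with y hy
    rw [← EReal.coe_sub, ← EReal.coe_neg, EReal.coe_le_coe_iff]
    have : ⟪μ, u⟫ + t ≤ y := EReal.coe_le_coe_iff.mp hu
    linarith

lemma aux_hard {m : ℕ}
    (p : EuclideanSpace ℝ (Fin m) → EReal)
    (hpbot : ∀ u, p u ≠ ⊥)
    (hpproper : ∃ u, p u ≠ ⊤)
    (hpconvex : ∀ u w : EuclideanSpace ℝ (Fin m), ∀ θ : ℝ, 0 ≤ θ → θ ≤ 1 →
      p (θ • u + (1 - θ) • w) ≤ (θ : EReal) * p u + ((1 - θ : ℝ) : EReal) * p w)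
    (hminorant : ∃ (μ : EuclideanSpace ℝ (Fin m)) (β : ℝ),
      ∀ u, ((⟪μ, u⟫ + β : ℝ) : EReal) ≤ p u) :
    (⨆ ε : {e : ℝ // 0 < e}, sInf {y : EReal |
        ∃ u : EuclideanSpace ℝ (Fin m), ‖u‖ ≤ (ε : ℝ) ∧ y = p u}) ≤
      ⨆ μ : EuclideanSpace ℝ (Fin m),
        -(⨆ u : EuclideanSpace ℝ (Fin m), (((⟪μ, u⟫ : ℝ) : EReal) - p u)) := by
  rw [← EReal.ge_of_forall_gt_iff_ge]
  intro t ht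
  rw [lt_iSup_iff] at ht
  obtain ⟨⟨ε₀, hε₀⟩, ht⟩ := ht
  have hball : ∀ v : EuclideanSpace ℝ (Fin m), ‖v‖ ≤ ε₀ → (t : EReal) < p v :=
    fun v hv => ht.trans_le (sInf_le ⟨v, hv, rfl⟩)
  set S : Set (EuclideanSpace ℝ (Fin m) × ℝ) :=
    Metric.ball (0 : EuclideanSpace ℝ (Fin m)) ε₀ ×ˢ Set.Iio t with hSdef
  set T : Set (EuclideanSpace ℝ (Fin m) × ℝ) :=
    {q | p q.1 ≤ (q.2 : EReal)} with hTdef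
  have hSconv : Convex ℝ S := (convex_ball 0 ε₀).prod (convex_Iio t)
  have hSopen : IsOpen S := Metric.isOpen_ball.prod isOpen_Iio
  have hTconv : Convex ℝ T := by
    rintro ⟨w₁, x₁⟩ hq₁ ⟨w₂, x₂⟩ hq₂ a b ha hb hab
    have hb' : b = 1 - a := by linarith
    subst hb'
    simp only [hTdef, Set.mem_setOf_eq] at hq₁ hq₂ ⊢
    have h1t : p w₁ ≠ ⊤ := ne_top_of_le_ne_top (EReal.coe_ne_top x₁) hq₁
    have h2t : p w₂ ≠ ⊤ := ne_top_of_le_ne_top (EReal.coe_ne_top x₂) hq₂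
    lift p w₁ to ℝ using ⟨h1t, hpbot w₁⟩ with r₁ hr₁
    lift p w₂ to ℝ using ⟨h2t, hpbot w₂⟩ with r₂ hr₂
    have hc := hpconvex w₁ w₂ a ha (by linarith)
    rw [← hr₁, ← hr₂] at hc
    simp only [Prod.smul_fst, Prod.smul_snd, Prod.fst_add, Prod.snd_add, smul_eq_mul]
    refine hc.trans ?_
    rw [← EReal.coe_mul, ← EReal.coe_mul, ← EReal.coe_add, EReal.coe_le_coe_iff]
    have e1 : r₁ ≤ x₁ := EReal.coe_le_coe_iff.mp hq₁
    have e2 : r₂ ≤ x₂ := EReal.coe_le_coe_iff.mp hq₂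
    nlinarith
  have hdisj : Disjoint S T := by
    rw [Set.disjoint_left]
    rintro ⟨w, x⟩ hqS hqT
    obtain ⟨hw, hx⟩ := hqS
    simp only [Metric.mem_ball, dist_zero_right] at hw
    simp only [Set.mem_Iio] at hx
    have h1 : (t : EReal) < p w := hball w hw.le
    have h2 : p w ≤ (x : EReal) := hqT
    have h3 : (x : EReal) < (t : EReal) := EReal.coe_lt_coe_iff.mpr hx
    exact absurd ((h1.trans_le h2).trans h3) (lt_irrefl _)
  obtain ⟨f, u, hfS, hfT⟩ := geometric_hahn_banach_open hSconv hSopen hTconv hdisj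
  set c : ℝ := f (0, 1) with hcdef
  have hf : ∀ (w : EuclideanSpace ℝ (Fin m)) (r : ℝ), f (w, r) = f (w, 0) + r * c := by
    intro w r
    have : (w, r) = (w, (0:ℝ)) + r • ((0 : EuclideanSpace ℝ (Fin m)), (1:ℝ)) := by
      simp [Prod.ext_iff]
    rw [this, map_add, map_smul, smul_eq_mul]
  have hf00 : f ((0 : EuclideanSpace ℝ (Fin m)), (0:ℝ)) = 0 := map_zero f
  have hmemS : ∀ r : ℝ, r < t → ((0 : EuclideanSpace ℝ (Fin m)), r) ∈ S := by
    intro r hr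
    exact ⟨Metric.mem_ball_self hε₀, hr⟩
  have hrc : ∀ r : ℝ, r < t → r * c < u := by
    intro r hr
    have := hfS _ (hmemS r hr)
    rwa [hf, hf00, zero_add] at this
  have hc : 0 ≤ c := by
    by_contra hcneg
    push_neg at hcneg
    set r : ℝ := min (t - 1) (u / c) with hrdef
    have hr : r < t := (min_le_left _ _).trans_lt (by linarith)
    have h1 : u ≤ r * c := by
      have : r ≤ u / c := min_le_right _ _
      calc u = (u / c) * c := (div_mul_cancel₀ u hcneg.ne).symm
      _ ≤ r * c := by nlinarith
    linarith [hrc r hr]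
  have domlb : ∀ (w : EuclideanSpace ℝ (Fin m)) (x : ℝ), p w ≤ (x : EReal) →
      u ≤ f (w, 0) + x * c := by
    intro w x hx
    have := hfT (w, x) hx
    rwa [hf] at this
  rcases hc.lt_or_eq with hcpos | hczero
  · -- c > 0 : nonvertical separating hyperplane
    have htc : t * c ≤ u := by
      by_contra hcon
      push_neg at hcon
      have hr : u / c < t := (div_lt_iff₀ hcpos).mpr (by linarith)
      have := hrc (u / c) hr
      rw [div_mul_cancel₀ u hcpos.ne'] at this
      exact lt_irrefl _ this
    set g : EuclideanSpace ℝ (Fin m) →L[ℝ] ℝ :=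
      f.comp (ContinuousLinearMap.inl ℝ _ _) with hgdef
    set μ₀ : EuclideanSpace ℝ (Fin m) :=
      (InnerProductSpace.toDual ℝ (EuclideanSpace ℝ (Fin m))).symm (-(c⁻¹) • g) with hμ₀def
    have hμ₀ : ∀ w, ⟪μ₀, w⟫ = -(c⁻¹) * f (w, 0) := by
      intro w
      rw [hμ₀def, InnerProductSpace.toDual_symm_apply]
      simp [hgdef]
    refine aux_minorant_le_biconj p μ₀ t ?_
    intro w
    rcases eq_or_ne (p w) ⊤ with htop | hne
    · simp [htop]
    · lift p w to ℝ using ⟨hne, hpbot w⟩ with x hx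
      rw [EReal.coe_le_coe_iff, hμ₀ w]
      have key : t * c ≤ f (w, 0) + x * c := htc.trans (domlb w x hx.ge)
      have h1 : (t * c - f (w, 0)) / c ≤ x := (div_le_iff₀ hcpos).mpr (by linarith)
      have h2 : -(c⁻¹) * f (w, 0) + t = (t * c - f (w, 0)) / c := by
        field_simp
        ring
      linarith
  · -- c = 0 : vertical hyperplane; push using the affine minorant
    have hupos : 0 < u := by
      have := hrc (t - 1) (by linarith)
      rw [← hczero] at this
      simpa using this
    have hg : ∀ (w : EuclideanSpace ℝ (Fin m)) (x : ℝ), p w ≤ (x : EReal) →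
        u ≤ f (w, 0) := by
      intro w x hx
      have := domlb w x hx
      rw [← hczero, mul_zero, add_zero] at this
      exact this
    set g : EuclideanSpace ℝ (Fin m) →L[ℝ] ℝ :=
      f.comp (ContinuousLinearMap.inl ℝ _ _) with hgdef
    set μ₁ : EuclideanSpace ℝ (Fin m) :=
      (InnerProductSpace.toDual ℝ (EuclideanSpace ℝ (Fin m))).symm g with hμ₁def
    have hμ₁ : ∀ w, ⟪μ₁, w⟫ = f (w, 0) := by
      intro w
      rw [hμ₁def, InnerProductSpace.toDual_symm_apply]
      simp [hgdef]
    obtain ⟨ν, β, hν⟩ := hminorant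
    set k : ℝ := max 0 ((t - β) / u) with hkdef
    have hk0 : 0 ≤ k := le_max_left _ _
    have hk1 : t - β ≤ k * u := by
      have : (t - β) / u ≤ k := le_max_right _ _
      calc t - β = ((t - β) / u) * u := by field_simp
      _ ≤ k * u := mul_le_mul_of_nonneg_right this hupos.le
    refine aux_minorant_le_biconj p (ν - k • μ₁) t ?_
    intro w
    rcases eq_or_ne (p w) ⊤ with htop | hne
    · simp [htop]
    · lift p w to ℝ using ⟨hne, hpbot w⟩ with x hx
      rw [EReal.coe_le_coe_iff]
      have hb : ⟪ν, w⟫ + β ≤ x := by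
        have := hν w
        rw [← hx, EReal.coe_le_coe_iff] at this
        exact this
      have hgw : u ≤ f (w, 0) := hg w x hx.ge
      have hinner : ⟪ν - k • μ₁, w⟫ = ⟪ν, w⟫ - k * f (w, 0) := by
        rw [inner_sub_left, real_inner_smul_left, hμ₁ w]
      rw [hinner]
      nlinarith

lemma aux_easy {m : ℕ} (p : EuclideanSpace ℝ (Fin m) → EReal)
    (hpbot : ∀ u, p u ≠ ⊥) :
    (⨆ μ : EuclideanSpace ℝ (Fin m),
        -(⨆ u : EuclideanSpace ℝ (Fin m), (((⟪μ, u⟫ : ℝ) : EReal) - p u))) ≤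
      ⨆ ε : {e : ℝ // 0 < e}, sInf {y : EReal |
        ∃ u : EuclideanSpace ℝ (Fin m), ‖u‖ ≤ (ε : ℝ) ∧ y = p u} := by
  refine iSup_le fun μ => ?_
  rw [← EReal.ge_of_forall_gt_iff_ge]
  intro t ht
  -- from t < -(sup ...) deduce pointwise lower bound
  have hS : (⨆ u : EuclideanSpace ℝ (Fin m), (((⟪μ, u⟫ : ℝ) : EReal) - p u)) < -(t : EReal) :=
    EReal.lt_neg_of_lt_neg ht
  have hpt : ∀ u, ((⟪μ, u⟫ + t : ℝ) : EReal) ≤ p u := by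
    intro u
    have hu : (((⟪μ, u⟫ : ℝ) : EReal) - p u) < -(t : EReal) := (le_iSup _ u).trans_lt hS
    rcases eq_or_ne (p u) ⊤ with htop | hne
    · simp [htop]
    · lift p u to ℝ using ⟨hne, hpbot u⟩ with y hy
      rw [← EReal.coe_sub, ← EReal.coe_neg, EReal.coe_lt_coe_iff] at hu
      rw [EReal.coe_le_coe_iff]
      linarith
  -- now show t ≤ LHS via s < t
  rw [← EReal.ge_of_forall_gt_iff_ge]
  intro s hs
  rw [EReal.coe_lt_coe_iff] at hs
  set ε : ℝ := (t - s) / (‖μ‖ + 1) with hε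
  have hμ1 : (0:ℝ) < ‖μ‖ + 1 := by positivity
  have hεpos : 0 < ε := div_pos (by linarith) hμ1
  refine le_trans ?_ (le_iSup _ (⟨ε, hεpos⟩ : {e : ℝ // 0 < e}))
  refine le_sInf fun y hy => ?_
  obtain ⟨u, hu, rfl⟩ := hy
  refine le_trans ?_ (hpt u)
  rw [EReal.coe_le_coe_iff]
  have hip : |⟪μ, u⟫| ≤ ‖μ‖ * ε := by
    calc |⟪μ, u⟫| ≤ ‖μ‖ * ‖u‖ := abs_real_inner_le_norm μ u
    _ ≤ ‖μ‖ * ε := by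
        exact mul_le_mul_of_nonneg_left hu (norm_nonneg μ)
  have hεb : (‖μ‖ + 1) * ε = t - s := by
    rw [hε]
    field_simp [hμ1.ne']
  nlinarith [abs_nonneg ⟪μ, u⟫, neg_abs_le ⟪μ, u⟫, hεpos]


theorem limit_inf_eq_biconjugate_at_zero {m : ℕ}
    (p : EuclideanSpace ℝ (Fin m) → EReal)
    (hpbot : ∀ u, p u ≠ ⊥)
    (hpproper : ∃ u, p u ≠ ⊤)
    (hpconvex : ∀ u w : EuclideanSpace ℝ (Fin m), ∀ θ : ℝ, 0 ≤ θ → θ ≤ 1 →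
      p (θ • u + (1 - θ) • w) ≤ (θ : EReal) * p u + ((1 - θ : ℝ) : EReal) * p w)
    (hminorant : ∃ (μ : EuclideanSpace ℝ (Fin m)) (β : ℝ),
      ∀ u, ((⟪μ, u⟫ + β : ℝ) : EReal) ≤ p u) :
    ⨆ ε : {e : ℝ // 0 < e}, sInf {y : EReal |
        ∃ u : EuclideanSpace ℝ (Fin m), ‖u‖ ≤ (ε : ℝ) ∧ y = p u} =
      ⨆ μ : EuclideanSpace ℝ (Fin m),
        -(⨆ u : EuclideanSpace ℝ (Fin m), (((⟪μ, u⟫ : ℝ) : EReal) - p u)) :=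
  le_antisymm (aux_hard p hpbot hpproper hpconvex hminorant) (aux_easy p hpbot)
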